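/- If (g, [·,·]_1, [·,·]_2) is a compatible Lie algebra and α : g → g is a Lie algebra homomorphism for both brackets, then (g, α∘[·,·]_1, α∘[·,·]_2, α) is a compatible Hom-Lie algebra. -/
import Mathlib


/-- A bilinear map, as a predicate on plain two-argument functions. -/
def IsBilin (K : Type*) {M N P : Type*} [Field K] [AddCommGroup M] [Module K M]
    [AddCommGroup N] [Module K N] [AddCommGroup P] [Module K P]
    (b : M → N → P) : Prop :=
  (∀ x, IsLinearMap K (b x)) ∧ (∀ y, IsLinearMap K fun x => b x y)

/-- A Hom-Lie algebra structure: bilinear skew-symmetric bracket `b` and a linear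
twisting map `α` satisfying multiplicativity and the Hom-Jacobi identity. -/
def IsHomLie (K : Type*) {g : Type*} [Field K] [AddCommGroup g] [Module K g]
    (b : g → g → g) (α : g → g) : Prop :=
  IsBilin K b ∧ IsLinearMap K α ∧
  (∀ x y, b x y = - b y x) ∧
  (∀ x y, α (b x y) = b (α x) (α y)) ∧
  (∀ x y z, b (b x y) (α z) + b (b y z) (α x) + b (b z x) (α y) = 0)

/-- A compatible Hom-Lie algebra: both brackets and every linear combination of
them are Hom-Lie brackets with the same twisting map `α`. -/
def IsCompatHomLie (K : Type*) {g : Type*} [Field K] [AddCommGroup g] [Module K g]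
    (b₁ b₂ : g → g → g) (α : g → g) : Prop :=
  IsHomLie K b₁ α ∧ IsHomLie K b₂ α ∧
  ∀ l m : K, IsHomLie K (fun x y => l • b₁ x y + m • b₂ x y) α

/-- A Lie algebra structure as a predicate. -/
def IsLie (K : Type*) {g : Type*} [Field K] [AddCommGroup g] [Module K g]
    (b : g → g → g) : Prop :=
  IsBilin K b ∧ (∀ x y, b x y = - b y x) ∧
  (∀ x y z, b (b x y) z + b (b y z) x + b (b z x) y = 0)


lemma yoneda_aux {K g : Type*} [Field K] [AddCommGroup g] [Module K g]
    (b : g → g → g) (α : g → g) (h : IsLie K b) (hα : IsLinearMap K α)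
    (hm : ∀ x y, α (b x y) = b (α x) (α y)) :
    IsHomLie K (fun x y => α (b x y)) α := by
  obtain ⟨⟨hl, hr⟩, hskew, hjac⟩ := h
  refine ⟨⟨fun x => ⟨fun a c => by simp [(hl x).map_add, hα.map_add],
      fun c a => by simp [(hl x).map_smul, hα.map_smul]⟩,
    fun y => ⟨fun a c => by simp [(hr y).map_add, hα.map_add],
      fun c a => by simp [(hr y).map_smul, hα.map_smul]⟩⟩, hα,
    fun x y => by simp only []; rw [hskew, hα.map_neg],
    fun x y => by simp only []; rw [hm, hm],
    fun x y z => ?_⟩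
  simp only []
  simp only [← hm]
  rw [← hα.map_add, ← hα.map_add, ← hα.map_add, ← hα.map_add, hjac]
  simp [hα.map_smul, (show α 0 = 0 from hα.map_zero)]

/-- A compatible Lie algebra together with a homomorphism `α` for both brackets
yields, by composition, a compatible Hom-Lie algebra. -/
theorem stmt5 {K g : Type*} [Field K] [AddCommGroup g] [Module K g]
    (b₁ b₂ : g → g → g) (α : g → g)
    (h₁ : IsLie K b₁) (h₂ : IsLie K b₂)
    (hcomp : ∀ l m : K, IsLie K (fun x y => l • b₁ x y + m • b₂ x y))
    (hα : IsLinearMap K α)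
    (hm₁ : ∀ x y, α (b₁ x y) = b₁ (α x) (α y))
    (hm₂ : ∀ x y, α (b₂ x y) = b₂ (α x) (α y)) :
    IsCompatHomLie K (fun x y => α (b₁ x y)) (fun x y => α (b₂ x y)) α := by
  refine ⟨yoneda_aux b₁ α h₁ hα hm₁, yoneda_aux b₂ α h₂ hα hm₂, fun l m => ?_⟩
  have : (fun x y => l • α (b₁ x y) + m • α (b₂ x y))
      = fun x y => α (l • b₁ x y + m • b₂ x y) := by
    funext x y
    rw [hα.map_add, hα.map_smul, hα.map_smul]
  rw [this]
  exact yoneda_aux _ α (hcomp l m) hα (fun x y => by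
    simp only [hα.map_add, hα.map_smul, hm₁, hm₂])
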